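/- Let f : 2^X → ℝ be a polymatroid function on a finite set X (normalized: f(∅) = 0, monotone, and submodular), and let A be an exact k-cover of X. Then f(X) ≤ (1/k) Σ_{A ∈ A} f(A). -/

import Mathlib

/-- Shearer's lemma for polymatroids: if `f : 2^X → ℝ` is normalized, monotone and
submodular, and `𝒜` is an exact `k`-cover of `X`, then `f(X) ≤ (1/k) Σ_{A ∈ 𝒜} f(A)`,
stated multiplied through by `k`. -/
theorem polymatroid_shearer {X : Type*} [Fintype X] [DecidableEq X]
    (f : Finset X → ℝ) (h0 : f ∅ = 0)
    (hmono : ∀ A B : Finset X, A ⊆ B → f A ≤ f B)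
    (hsub : ∀ A B : Finset X, f (A ∪ B) + f (A ∩ B) ≤ f A + f B)
    (k : ℕ) (𝒜 : Multiset (Finset X))
    (hcov : ∀ x : X, 𝒜.countP (fun A => x ∈ A) = k) :
    (k : ℝ) * f Finset.univ ≤ (𝒜.map f).sum := by
  letI : LinearOrder X := LinearOrder.lift' (Fintype.equivFin X) (Fintype.equivFin X).injective
  set P : X → Finset X := fun a => Finset.univ.filter (fun y => y < a) with hP
  set g : X → ℝ := fun a => f (insert a (P a)) - f (P a) with hg
  -- key inequality
  have key : ∀ A : Finset X, ∑ x ∈ A, g x ≤ f A := by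
    intro A
    induction A using Finset.induction_on_max with
    | empty => simp [h0]
    | insert a s hs ih =>
      have hsP : s ⊆ P a := fun x hx => by
        simp only [hP, Finset.mem_filter, Finset.mem_univ, true_and]
        exact hs x hx
      have haP : a ∉ P a := by simp [hP]
      have has : a ∉ s := fun h => lt_irrefl a (hs a h)
      rw [Finset.sum_insert has]
      have hsub' := hsub (insert a s) (P a)
      rw [Finset.insert_union, Finset.union_eq_right.mpr hsP,
        Finset.insert_inter_of_notMem haP, Finset.inter_eq_left.mpr hsP] at hsub'
      have : g a = f (insert a (P a)) - f (P a) := rfl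
      linarith [ih]
  -- telescoping equality on the whole universe
  have feq : ∀ A : Finset X, (∀ x ∈ A, ∀ y, y < x → y ∈ A) → ∑ x ∈ A, g x = f A := by
    intro A
    induction A using Finset.induction_on_max with
    | empty => simp [h0]
    | insert a s hs ih =>
      intro hcl
      have hsP : s ⊆ P a := fun x hx => by
        simp only [hP, Finset.mem_filter, Finset.mem_univ, true_and]
        exact hs x hx
      have has : a ∉ s := fun h => lt_irrefl a (hs a h)
      have hseq : s = P a := by
        apply Finset.Subset.antisymm hsP
        intro x hx
        have hxa : x < a := by
          simpa only [hP, Finset.mem_filter, Finset.mem_univ, true_and] using hx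
        have : x ∈ insert a s := hcl a (Finset.mem_insert_self a s) x hxa
        rcases Finset.mem_insert.mp this with h | h
        · exact absurd (h ▸ hxa) (lt_irrefl a)
        · exact h
      have hscl : ∀ x ∈ s, ∀ y, y < x → y ∈ s := by
        intro x hx y hyx
        have hya : y < a := lt_trans hyx (hs x hx)
        have : y ∈ insert a s := hcl x (Finset.mem_insert_of_mem hx) y hyx
        rcases Finset.mem_insert.mp this with h | h
        · exact absurd (h ▸ hya) (lt_irrefl a)
        · exact h
      rw [Finset.sum_insert has, ih hscl, hseq]
      have : g a = f (insert a (P a)) - f (P a) := rfl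
      linarith
  have funiv : ∑ x : X, g x = f Finset.univ := feq Finset.univ (by simp)
  -- sum over the multiset
  have hmap : ∀ S : Multiset (Finset X),
      (S.map (fun A => ∑ x ∈ A, g x)).sum
        = ∑ x : X, (S.countP (fun A => x ∈ A) : ℝ) * g x := by
    intro S
    induction S using Multiset.induction_on with
    | empty => simp
    | cons A S ih =>
      simp only [Multiset.map_cons, Multiset.sum_cons, ih, Multiset.countP_cons]
      push_cast
      rw [Finset.sum_congr rfl (fun x _ => add_mul _ _ _), Finset.sum_add_distrib]
      have : ∑ x : X, (if x ∈ A then (1 : ℝ) else 0) * g x = ∑ x ∈ A, g x := by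
        rw [Finset.sum_congr rfl (fun x _ => by rw [ite_mul, one_mul, zero_mul]),
          Finset.sum_ite_mem, Finset.univ_inter]
      rw [this]
      ring
  have hle : (𝒜.map (fun A => ∑ x ∈ A, g x)).sum ≤ (𝒜.map f).sum :=
    Multiset.sum_map_le_sum_map _ _ (fun A _ => key A)
  calc (k : ℝ) * f Finset.univ = ∑ x : X, (k : ℝ) * g x := by
        rw [← funiv, Finset.mul_sum]
    _ = (𝒜.map (fun A => ∑ x ∈ A, g x)).sum := by
        rw [hmap]
        exact Finset.sum_congr rfl (fun x _ => by rw [hcov x])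
    _ ≤ (𝒜.map f).sum := hle
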